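/- arXiv:2206.10290 — 5 statements merged into one kernel-verified Lean document; each statement's English description precedes it below -/
import Mathlib

section
/- Let A, B, C be non-negative real numbers with A + B*T ≠ 0, T > 0, τ > 0, and let {Z_n}_{n=0}^N be a non-negative sequence with Z_0 = 0 satisfying Z_n ≤ Z_{n-1} + A*τ*Z_{n-1} + B*τ²*∑_{m=1}^{n-1} Z_m + C*τ² for all 1 ≤ n ≤ N, where N*τ ≤ T. Then Z_n ≤ (C/(A+B*T))*((1 + A*τ + B*T*τ)^n − 1)*τ for all 1 ≤ n ≤ N. -/
theorem discrete_gronwall_geometric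
    (A B C T τ : ℝ) (N : ℕ) (Z : ℕ → ℝ)
    (hA : 0 ≤ A) (hB : 0 ≤ B) (hC : 0 ≤ C)
    (hABT : A + B * T ≠ 0) (hT : 0 < T) (hτ : 0 < τ)
    (hNT : (N : ℝ) * τ ≤ T)
    (hZ0 : Z 0 = 0) (hZnonneg : ∀ n, 0 ≤ Z n)
    (hrec : ∀ n, 1 ≤ n → n ≤ N →
      Z n ≤ Z (n - 1) + A * τ * Z (n - 1)
        + B * τ ^ 2 * ∑ m ∈ Finset.Icc 1 (n - 1), Z m + C * τ ^ 2) :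
    ∀ n, 1 ≤ n → n ≤ N →
      Z n ≤ C / (A + B * T) * ((1 + A * τ + B * T * τ) ^ n - 1) * τ := by
  have hK : 0 < A + B * T := by
    rcases lt_or_eq_of_le (by positivity : (0:ℝ) ≤ A + B * T) with h | h
    · exact h
    · exact absurd h.symm hABT
  set r : ℝ := 1 + A * τ + B * T * τ with hrdef
  have hr1 : 1 ≤ r := by nlinarith
  set W : ℕ → ℝ := fun n => C / (A + B * T) * (r ^ n - 1) * τ with hWdef
  have hW0 : W 0 = 0 := by simp [hWdef]
  have hWnonneg : ∀ n, 0 ≤ W n := by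
    intro n
    have : (1:ℝ) ≤ r ^ n := one_le_pow₀ hr1
    have h1 : 0 ≤ r ^ n - 1 := by linarith
    positivity
  have hWmono : ∀ m k, m ≤ k → W m ≤ W k := by
    intro m k hmk
    have : r ^ m ≤ r ^ k := pow_le_pow_right₀ hr1 hmk
    have h2 : 0 ≤ C / (A + B * T) := by positivity
    simp only [hWdef]
    have := mul_le_mul_of_nonneg_left (sub_le_sub_right this 1) h2
    exact mul_le_mul_of_nonneg_right this hτ.le
  have hWrec : ∀ n, W (n + 1) = r * W n + C * τ ^ 2 := by
    intro n
    simp only [hWdef]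
    field_simp
    ring
  have main : ∀ n, n ≤ N → Z n ≤ W n := by
    intro n
    induction n using Nat.strong_induction_on with
    | _ n ih =>
      intro hn
      match n with
      | 0 => simp [hZ0, hW0]
      | k + 1 =>
        have hrec' := hrec (k + 1) (Nat.le_add_left 1 k) hn
        simp only [Nat.add_sub_cancel] at hrec'
        have hZk : Z k ≤ W k := ih k (Nat.lt_succ_self k) (le_of_lt hn)
        have hS : ∑ m ∈ Finset.Icc 1 k, Z m ≤ (k : ℝ) * W k := by
          calc ∑ m ∈ Finset.Icc 1 k, Z m ≤ ∑ m ∈ Finset.Icc 1 k, W m := by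
                refine Finset.sum_le_sum fun m hm => ?_
                have hm' := Finset.mem_Icc.mp hm
                exact (ih m (Nat.lt_succ_of_le hm'.2) (le_trans (Nat.le_succ_of_le hm'.2) hn)).trans le_rfl
            _ ≤ ∑ m ∈ Finset.Icc 1 k, W k := by
                refine Finset.sum_le_sum fun m hm => ?_
                exact hWmono m k (Finset.mem_Icc.mp hm).2
            _ = (k : ℝ) * W k := by
                rw [Finset.sum_const, Nat.card_Icc]
                simp [nsmul_eq_mul]
        have hkT : (k : ℝ) * τ ≤ T := by
          have h1 : (k : ℝ) ≤ (N : ℝ) := by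
            exact_mod_cast le_of_lt hn
          calc (k : ℝ) * τ ≤ (N : ℝ) * τ := by
                exact mul_le_mul_of_nonneg_right h1 hτ.le
            _ ≤ T := hNT
        have hWk := hWnonneg k
        rw [hWrec k, hrdef]
        nlinarith [mul_le_mul_of_nonneg_left hS (mul_nonneg hB (sq_nonneg τ)),
          mul_le_mul_of_nonneg_left hkT (mul_nonneg (mul_nonneg hB hτ.le) hWk),
          mul_le_mul_of_nonneg_left hZk (mul_nonneg hA hτ.le)]
  intro n h1 hN
  exact main n hN
end

section
/- Let A, B, C be non-negative real numbers with A + B*T ≠ 0, T > 0, τ > 0, N*τ ≤ T, and let {Z_n}_{n=0}^N be a non-negative sequence with Z_0 = 0 satisfying Z_n ≤ Z_{n-1} + A*τ*Z_{n-1} + B*τ²*∑_{m=1}^{n-1} Z_m + C*τ² for all 1 ≤ n ≤ N. Then Z_n ≤ (C/(A+B*T))*(exp((A+B*T)*T) − 1)*τ for all 1 ≤ n ≤ N. -/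
theorem discrete_gronwall_exponential
    (A B C T τ : ℝ) (N : ℕ) (Z : ℕ → ℝ)
    (hA : 0 ≤ A) (hB : 0 ≤ B) (hC : 0 ≤ C)
    (hABT : A + B * T ≠ 0) (hT : 0 < T) (hτ : 0 < τ)
    (hNT : (N : ℝ) * τ ≤ T)
    (hZ0 : Z 0 = 0) (hZnonneg : ∀ n, 0 ≤ Z n)
    (hrec : ∀ n, 1 ≤ n → n ≤ N →
      Z n ≤ Z (n - 1) + A * τ * Z (n - 1)
        + B * τ ^ 2 * ∑ m ∈ Finset.Icc 1 (n - 1), Z m + C * τ ^ 2) :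
    ∀ n, 1 ≤ n → n ≤ N →
      Z n ≤ C / (A + B * T) * (Real.exp ((A + B * T) * T) - 1) * τ := by
  set D : ℝ := A + B * T with hD
  have hD0 : 0 < D := by
    have : 0 ≤ D := by positivity
    exact lt_of_le_of_ne this (Ne.symm hABT)
  set K : ℝ := C * τ / D with hKdef
  have hK : 0 ≤ K := by positivity
  set q : ℝ := 1 + D * τ with hq
  have hq1 : 1 ≤ q := by nlinarith
  have hq0 : 0 ≤ q := by linarith
  -- key induction
  have key : ∀ n, n ≤ N → Z n ≤ K * (q ^ n - 1) := by
    intro n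
    induction n using Nat.strong_induction_on with
    | _ n ih =>
      intro hnN
      match n with
      | 0 => simp [hZ0]
      | (k+1) =>
        have hkN : k ≤ N := by omega
        have hkτ : (k : ℝ) * τ ≤ T - τ := by
          have h1 : ((k : ℝ) + 1) * τ ≤ (N : ℝ) * τ := by
            have : ((k : ℝ) + 1) ≤ (N : ℝ) := by exact_mod_cast hnN
            nlinarith
          nlinarith
        have hrn := hrec (k+1) (by omega) hnN
        simp only [Nat.add_sub_cancel] at hrn
        have hik : Z k ≤ K * (q ^ k - 1) := ih k (by omega) hkN
        -- every term in the sum bounded by K * (q^k - 1)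
        have hsum : ∑ m ∈ Finset.Icc 1 k, Z m ≤ (k : ℝ) * (K * (q ^ k - 1)) := by
          calc ∑ m ∈ Finset.Icc 1 k, Z m
              ≤ ∑ m ∈ Finset.Icc 1 k, K * (q ^ k - 1) := by
                apply Finset.sum_le_sum
                intro m hm
                simp only [Finset.mem_Icc] at hm
                have h1 : Z m ≤ K * (q ^ m - 1) := ih m (by omega) (by omega)
                have h2 : q ^ m ≤ q ^ k := pow_le_pow_right₀ hq1 hm.2
                nlinarith
            _ = (k : ℝ) * (K * (q ^ k - 1)) := by
                simp [Finset.sum_const, Nat.card_Icc]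
    -- combine
        have hqk1 : 1 ≤ q ^ k := one_le_pow₀ hq1
        have hKD : C * τ ^ 2 = K * D * τ := by
          field_simp [hKdef]
          rw [hKdef, div_mul_cancel₀ _ hABT]
        have hBk : B * τ ^ 2 * ((k : ℝ) * (K * (q ^ k - 1)))
            ≤ B * T * τ * (K * (q ^ k - 1)) := by
          have hnn : 0 ≤ K * (q ^ k - 1) := by nlinarith
          have h5 := mul_le_mul_of_nonneg_left hkτ (by positivity : (0:ℝ) ≤ B * τ)
          have : B * τ ^ 2 * (k : ℝ) ≤ B * T * τ := by nlinarith
          nlinarith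
        have hZk := hZnonneg k
        have : Z (k+1) ≤ Z k + A * τ * Z k + B * T * τ * (K * (q ^ k - 1)) + C * τ ^ 2 := by
          have hsum' : B * τ ^ 2 * ∑ m ∈ Finset.Icc 1 k, Z m
              ≤ B * τ ^ 2 * ((k : ℝ) * (K * (q ^ k - 1))) := by
            apply mul_le_mul_of_nonneg_left hsum (by positivity)
          linarith
        calc Z (k+1) ≤ Z k + A * τ * Z k + B * T * τ * (K * (q ^ k - 1)) + C * τ ^ 2 := this
          _ ≤ K * (q ^ k - 1) + A * τ * (K * (q ^ k - 1))
              + B * T * τ * (K * (q ^ k - 1)) + K * D * τ := by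
            have h6 := mul_le_mul_of_nonneg_left hik (by positivity : (0:ℝ) ≤ A * τ)
            linarith
          _ = K * (q ^ (k+1) - 1) := by
            rw [pow_succ]
            rw [hq, hD]
            ring
  intro n hn1 hnN
  have h1 := key n hnN
  have hqe : q ^ n ≤ Real.exp (D * T) := by
    have h2 : q ≤ Real.exp (D * τ) := by
      have := Real.add_one_le_exp (D * τ)
      linarith [this]
    have h3 : q ^ n ≤ (Real.exp (D * τ)) ^ n := pow_le_pow_left₀ hq0 h2 n
    rw [← Real.exp_nat_mul] at h3
    have h4 : (n : ℝ) * (D * τ) ≤ D * T := by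
      have hcast : (n : ℝ) ≤ (N : ℝ) := by exact_mod_cast hnN
      have h5 : (n : ℝ) * τ ≤ T :=
        le_trans (mul_le_mul_of_nonneg_right hcast hτ.le) hNT
      calc (n : ℝ) * (D * τ) = D * ((n : ℝ) * τ) := by ring
        _ ≤ D * T := mul_le_mul_of_nonneg_left h5 hD0.le
    exact le_trans h3 (Real.exp_le_exp.mpr h4)
  have heq : C / D * (Real.exp (D * T) - 1) * τ = K * (Real.exp (D * T) - 1) := by
    rw [hKdef]
    ring
  rw [heq]
  have : K * (q ^ n - 1) ≤ K * (Real.exp (D * T) - 1) :=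
    mul_le_mul_of_nonneg_left (by linarith) hK
  linarith
end

section
/- Let x ∈ ℝ^d with ‖x‖ = 1, let v_1, ..., v_k ∈ ℝ^d be orthonormal with v_jᵀ x = 0 for all j, let F ∈ ℝ^d with ‖F‖ ≤ L₂, and let α, τ > 0. Define x̃ = x + τ*α*(I − x xᵀ − 2∑_{j=1}^k v_j v_jᵀ) F. Then xᵀ x̃ = 1, ‖x̃ − x‖ ≤ 2*τ*α*L₂, and |‖x̃‖² − 1| ≤ τ*α*L₂*‖x̃ − x‖; consequently |‖x̃‖ − 1| ≤ 2*α²*L₂²*τ². -/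
open RealInnerProductSpace

set_option maxHeartbeats 1000000 in
theorem euler_step_near_sphere
    (d k : ℕ) (x F : EuclideanSpace ℝ (Fin d))
    (v : Fin k → EuclideanSpace ℝ (Fin d))
    (L₂ α τ : ℝ)
    (hx : ‖x‖ = 1) (hv : Orthonormal ℝ v)
    (hvx : ∀ j, ⟪v j, x⟫ = 0)
    (hF : ‖F‖ ≤ L₂) (hα : 0 < α) (hτ : 0 < τ)
    (xt : EuclideanSpace ℝ (Fin d))
    (hxt : xt = x + (τ * α) • (F - ⟪x, F⟫ • x - (2 : ℝ) • ∑ j, ⟪v j, F⟫ • v j)) :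
    ⟪x, xt⟫ = 1 ∧ ‖xt - x‖ ≤ 2 * τ * α * L₂ ∧
      |‖xt‖ ^ 2 - 1| ≤ τ * α * L₂ * ‖xt - x‖ ∧
      |‖xt‖ - 1| ≤ 2 * α ^ 2 * L₂ ^ 2 * τ ^ 2 := by
  have hL : 0 ≤ L₂ := le_trans (norm_nonneg F) hF
  set a : ℝ := ⟪x, F⟫ with ha
  set s : EuclideanSpace ℝ (Fin d) := ∑ j, ⟪v j, F⟫ • v j with hs
  set w : EuclideanSpace ℝ (Fin d) := F - a • x - (2 : ℝ) • s with hw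
  clear_value a s w
  have hxx : ⟪x, x⟫ = 1 := by
    rw [real_inner_self_eq_norm_sq, hx]; norm_num
  have hxs : ⟪x, s⟫ = 0 := by
    rw [hs, inner_sum]
    refine Finset.sum_eq_zero fun j _ => ?_
    rw [real_inner_smul_right, real_inner_comm (v j) x, hvx j, mul_zero]
  have hFs : ⟪F, s⟫ = ∑ j, ⟪v j, F⟫ ^ 2 := by
    rw [hs, inner_sum]
    refine Finset.sum_congr rfl fun j _ => ?_
    rw [real_inner_smul_right, real_inner_comm (v j) F]; ring
  have hss : ⟪s, s⟫ = ∑ j, ⟪v j, F⟫ ^ 2 := by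
    rw [hs, hv.inner_sum]
    refine Finset.sum_congr rfl fun j _ => ?_
    simp [sq]
  have hxw : ⟪x, w⟫ = 0 := by
    rw [hw]
    simp only [inner_sub_right, real_inner_smul_right, hxx, hxs, ← ha]
    ring
  have hwF : ‖w‖ ^ 2 = ‖F‖ ^ 2 - a ^ 2 := by
    have hax : ‖a • x‖ ^ 2 = a ^ 2 := by
      rw [norm_smul, hx, Real.norm_eq_abs]; rw [mul_one, sq_abs]
    have h2s : ‖(2 : ℝ) • s‖ ^ 2 = 4 * ∑ j, ⟪v j, F⟫ ^ 2 := by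
      rw [norm_smul, Real.norm_eq_abs, mul_pow, ← real_inner_self_eq_norm_sq, hss]
      norm_num
    have hsx : ⟪s, x⟫ = 0 := (real_inner_comm x s).trans hxs
    have hsF : ⟪s, F⟫ = ∑ j, ⟪v j, F⟫ ^ 2 := (real_inner_comm F s).trans hFs
    have hFx : ⟪F, x⟫ = a := by rw [ha]; exact real_inner_comm x F
    rw [← real_inner_self_eq_norm_sq, hw]
    simp only [inner_sub_left, inner_sub_right, real_inner_smul_left,
      real_inner_smul_right, hxx, hxs, hFs, hss, hsx, hsF, hFx, ← ha,
      real_inner_self_eq_norm_sq, hax, h2s]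
    ring
  have hwn : ‖w‖ ≤ L₂ := by
    nlinarith [norm_nonneg w, norm_nonneg F, sq_nonneg a]
  have hd : xt - x = (τ * α) • w := by
    rw [hxt, hw]; abel
  have hτα : 0 < τ * α := mul_pos hτ hα
  have hdn : ‖xt - x‖ = (τ * α) * ‖w‖ := by
    rw [hd, norm_smul, Real.norm_eq_abs, abs_of_pos hτα]
  have hdle : ‖xt - x‖ ≤ τ * α * L₂ := by
    rw [hdn]
    exact mul_le_mul_of_nonneg_left hwn (le_of_lt hτα)
  have hxteq : xt = x + (τ * α) • w := by rw [hxt, hw]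
  have h1 : ⟪x, xt⟫ = 1 := by
    rw [hxteq, inner_add_right, real_inner_smul_right, hxx, hxw]; ring
  have hsq : ‖xt‖ ^ 2 = 1 + ‖xt - x‖ ^ 2 := by
    have h0 : ‖xt‖ ^ 2 = ⟪x + (τ * α) • w, x + (τ * α) • w⟫ := by
      rw [← hxteq, real_inner_self_eq_norm_sq]
    rw [h0, inner_add_left, inner_add_right, inner_add_right, real_inner_smul_left,
      real_inner_smul_right, real_inner_smul_left, real_inner_smul_right,
      hxx, hxw, real_inner_comm x w, hxw, real_inner_self_eq_norm_sq, hdn]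
    ring
  have h3 : |‖xt‖ ^ 2 - 1| ≤ τ * α * L₂ * ‖xt - x‖ := by
    have he : ‖xt‖ ^ 2 - 1 = ‖xt - x‖ ^ 2 := by rw [hsq]; ring
    rw [he, abs_of_nonneg (sq_nonneg _), sq]
    exact mul_le_mul_of_nonneg_right hdle (norm_nonneg _)
  have hge : 1 ≤ ‖xt‖ := by
    nlinarith [norm_nonneg xt, sq_nonneg (‖xt - x‖)]
  have h4 : |‖xt‖ - 1| ≤ 2 * α ^ 2 * L₂ ^ 2 * τ ^ 2 := by
    rw [abs_of_nonneg (by linarith)]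
    have hA : ‖xt - x‖ ^ 2 ≤ (τ * α * L₂) ^ 2 :=
      pow_le_pow_left₀ (norm_nonneg _) hdle 2
    have hB : ‖xt‖ - 1 ≤ ‖xt‖ ^ 2 - 1 := by nlinarith
    have hC : (τ * α * L₂) ^ 2 ≤ 2 * α ^ 2 * L₂ ^ 2 * τ ^ 2 := by
      nlinarith [sq_nonneg (τ * α * L₂)]
    linarith [hsq]
  refine ⟨h1, ?_, h3, h4⟩
  nlinarith [mul_nonneg hτα.le hL]
end

section
/- Fix G > M > 0. Suppose τ > 0 satisfies (M + τ²G²)/(1 − Mτ² − G²τ⁴)^{1/2} ≤ G (with 1 − Mτ² − G²τ⁴ > 0). Suppose vectors v̂_1, ..., v̂_k ∈ ℝ^d satisfy |v̂_mᵀ v̂_i| ≤ M·τ²/k² for m < i and |‖v̂_i‖² − 1| ≤ M·τ²/k² for all i, and define v_1, ..., v_k by the Gram–Schmidt recursion v_i = (1/Y_i)(v̂_i − ∑_{j<i}(v̂_iᵀ v_j) v_j) with Y_i = (‖v̂_i‖² − ∑_{j<i}(v̂_iᵀ v_j)²)^{1/2}. Then |v̂_iᵀ v_m| ≤ G·τ²/k²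 for all 1 ≤ m < i ≤ k. -/
open RealInnerProductSpace

set_option maxHeartbeats 1000000

theorem gram_schmidt_near_orthogonality_propagation
    (d k : ℕ) (G M τ : ℝ)
    (hGM : M < G) (hM : 0 < M) (hτ : 0 < τ)
    (hden : 0 < 1 - M * τ ^ 2 - G ^ 2 * τ ^ 4)
    (hτG : (M + τ ^ 2 * G ^ 2) / Real.sqrt (1 - M * τ ^ 2 - G ^ 2 * τ ^ 4) ≤ G)
    (vh v : Fin k → EuclideanSpace ℝ (Fin d)) (Y : Fin k → ℝ)
    (hinner : ∀ m i : Fin k, m < i → |⟪vh m, vh i⟫| ≤ M * τ ^ 2 / (k : ℝ) ^ 2)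
    (hnorm : ∀ i : Fin k, |‖vh i‖ ^ 2 - 1| ≤ M * τ ^ 2 / (k : ℝ) ^ 2)
    (hYdef : ∀ i : Fin k,
      Y i = Real.sqrt (‖vh i‖ ^ 2 - ∑ j ∈ Finset.Iio i, ⟪vh i, v j⟫ ^ 2))
    (hvdef : ∀ i : Fin k,
      v i = (Y i)⁻¹ • (vh i - ∑ j ∈ Finset.Iio i, ⟪vh i, v j⟫ • v j)) :
    ∀ m i : Fin k, m < i → |⟪vh i, v m⟫| ≤ G * τ ^ 2 / (k : ℝ) ^ 2 := by
  suffices H : ∀ n : ℕ, ∀ m : Fin k, (m : ℕ) = n →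
      ∀ i : Fin k, m < i → |⟪vh i, v m⟫| ≤ G * τ ^ 2 / (k : ℝ) ^ 2 by
    intro m i h
    exact H m m rfl i h
  intro n
  induction n using Nat.strong_induction_on with
  | _ n IH =>
  intro m hm i hmi
  have hk1 : (1 : ℝ) ≤ (k : ℝ) := by exact_mod_cast m.pos
  have hk0 : (0 : ℝ) < (k : ℝ) := by linarith
  have hk2 : (1 : ℝ) ≤ (k : ℝ) ^ 2 := by nlinarith
  set δ : ℝ := G * τ ^ 2 / (k : ℝ) ^ 2 with hδ
  have hG0 : 0 < G := hM.trans hGM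
  have hδ0 : 0 ≤ δ := by rw [hδ]; positivity
  have hkey : (k : ℝ) * δ ^ 2 ≤ G ^ 2 * τ ^ 4 / (k : ℝ) ^ 2 := by
    rw [hδ, div_pow, ← mul_div_assoc, div_le_div_iff₀ (by positivity) (by positivity)]
    have e1 : (k : ℝ) ^ 3 ≤ (k : ℝ) ^ 4 := pow_le_pow_right₀ hk1 (by norm_num)
    nlinarith [mul_le_mul_of_nonneg_left e1 (show (0:ℝ) ≤ G ^ 2 * τ ^ 4 by positivity)]
  -- induction hypothesis, reformulated
  have IH' : ∀ j : Fin k, j < m → ∀ i' : Fin k, j < i' → |⟪vh i', v j⟫| ≤ δ := by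
    intro j hj i' hji'
    exact IH j (by subst hm; exact hj) j rfl i' hji'
  -- bound on the sum of squares
  have hSle : ∑ j ∈ Finset.Iio m, ⟪vh m, v j⟫ ^ 2 ≤ G ^ 2 * τ ^ 4 / (k : ℝ) ^ 2 := by
    calc ∑ j ∈ Finset.Iio m, ⟪vh m, v j⟫ ^ 2
        ≤ ∑ j ∈ Finset.Iio m, δ ^ 2 := by
          refine Finset.sum_le_sum fun j hj => ?_
          have hjm : j < m := Finset.mem_Iio.mp hj
          have := IH' j hjm m hjm
          nlinarith [abs_nonneg (⟪vh m, v j⟫ : ℝ), sq_abs (⟪vh m, v j⟫ : ℝ)]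
      _ = ((Finset.Iio m).card : ℝ) * δ ^ 2 := by
          rw [Finset.sum_const, nsmul_eq_mul]
      _ ≤ (k : ℝ) * δ ^ 2 := by
          have : (Finset.Iio m).card ≤ k :=
            le_trans (Finset.card_le_univ _) (le_of_eq (Finset.card_fin k))
          have hc : ((Finset.Iio m).card : ℝ) ≤ (k : ℝ) := by exact_mod_cast this
          nlinarith [sq_nonneg δ]
      _ ≤ G ^ 2 * τ ^ 4 / (k : ℝ) ^ 2 := hkey
  have hε : M * τ ^ 2 / (k : ℝ) ^ 2 ≤ M * τ ^ 2 := by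
    rw [div_le_iff₀ (by positivity)]
    nlinarith [mul_le_mul_of_nonneg_left hk2 (show (0:ℝ) ≤ M * τ ^ 2 by positivity)]
  have hS2 : G ^ 2 * τ ^ 4 / (k : ℝ) ^ 2 ≤ G ^ 2 * τ ^ 4 := by
    rw [div_le_iff₀ (by positivity)]
    nlinarith [mul_le_mul_of_nonneg_left hk2 (show (0:ℝ) ≤ G ^ 2 * τ ^ 4 by positivity)]
  -- lower bound on Y m
  have hnormm := hnorm m
  have hnlo : 1 - M * τ ^ 2 / (k : ℝ) ^ 2 ≤ ‖vh m‖ ^ 2 := by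
    have := abs_le.mp hnormm
    linarith [this.1]
  have harg : 1 - M * τ ^ 2 - G ^ 2 * τ ^ 4 ≤
      ‖vh m‖ ^ 2 - ∑ j ∈ Finset.Iio m, ⟪vh m, v j⟫ ^ 2 := by
    linarith
  have hYlo : Real.sqrt (1 - M * τ ^ 2 - G ^ 2 * τ ^ 4) ≤ Y m := by
    rw [hYdef m]
    exact Real.sqrt_le_sqrt harg
  have hD : 0 < Real.sqrt (1 - M * τ ^ 2 - G ^ 2 * τ ^ 4) := Real.sqrt_pos.mpr hden
  have hY0 : 0 < Y m := lt_of_lt_of_le hD hYlo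
  -- expand the inner product
  have hexp : ⟪vh i, v m⟫ = (Y m)⁻¹ *
      (⟪vh i, vh m⟫ - ∑ j ∈ Finset.Iio m, ⟪vh m, v j⟫ * ⟪vh i, v j⟫) := by
    rw [hvdef m, real_inner_smul_right]
    simp only [inner_sub_right, inner_sum, real_inner_smul_right]
  -- bound the numerator
  have hnum : |⟪vh i, vh m⟫ - ∑ j ∈ Finset.Iio m, ⟪vh m, v j⟫ * ⟪vh i, v j⟫|
      ≤ (M + τ ^ 2 * G ^ 2) * (τ ^ 2 / (k : ℝ) ^ 2) := by
    have h1 : |⟪vh i, vh m⟫| ≤ M * τ ^ 2 / (k : ℝ) ^ 2 := by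
      rw [real_inner_comm]
      exact hinner m i hmi
    have h2 : |∑ j ∈ Finset.Iio m, ⟪vh m, v j⟫ * ⟪vh i, v j⟫| ≤ (k : ℝ) * δ ^ 2 := by
      calc |∑ j ∈ Finset.Iio m, ⟪vh m, v j⟫ * ⟪vh i, v j⟫|
          ≤ ∑ j ∈ Finset.Iio m, |⟪vh m, v j⟫ * ⟪vh i, v j⟫| :=
            Finset.abs_sum_le_sum_abs _ _
        _ ≤ ∑ j ∈ Finset.Iio m, δ ^ 2 := by
            refine Finset.sum_le_sum fun j hj => ?_
            have hjm : j < m := Finset.mem_Iio.mp hj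
            have ha := IH' j hjm m hjm
            have hb := IH' j hjm i (hjm.trans hmi)
            rw [abs_mul, sq]
            exact mul_le_mul ha hb (abs_nonneg _) hδ0
        _ = ((Finset.Iio m).card : ℝ) * δ ^ 2 := by
            rw [Finset.sum_const, nsmul_eq_mul]
        _ ≤ (k : ℝ) * δ ^ 2 := by
            have : (Finset.Iio m).card ≤ k :=
              le_trans (Finset.card_le_univ _) (le_of_eq (Finset.card_fin k))
            have hc : ((Finset.Iio m).card : ℝ) ≤ (k : ℝ) := by exact_mod_cast this
            nlinarith [sq_nonneg δ]
    have h3 : (k : ℝ) * δ ^ 2 ≤ τ ^ 2 * G ^ 2 * (τ ^ 2 / (k : ℝ) ^ 2) := by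
      calc (k : ℝ) * δ ^ 2 ≤ G ^ 2 * τ ^ 4 / (k : ℝ) ^ 2 := hkey
        _ = τ ^ 2 * G ^ 2 * (τ ^ 2 / (k : ℝ) ^ 2) := by ring
    calc |⟪vh i, vh m⟫ - ∑ j ∈ Finset.Iio m, ⟪vh m, v j⟫ * ⟪vh i, v j⟫|
        ≤ |⟪vh i, vh m⟫| + |∑ j ∈ Finset.Iio m, ⟪vh m, v j⟫ * ⟪vh i, v j⟫| :=
          abs_sub _ _
      _ ≤ M * τ ^ 2 / (k : ℝ) ^ 2 + (k : ℝ) * δ ^ 2 := add_le_add h1 h2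
      _ ≤ M * (τ ^ 2 / (k : ℝ) ^ 2) + τ ^ 2 * G ^ 2 * (τ ^ 2 / (k : ℝ) ^ 2) := by
          have : M * τ ^ 2 / (k : ℝ) ^ 2 = M * (τ ^ 2 / (k : ℝ) ^ 2) := by ring
          linarith [h3, this.ge]
      _ = (M + τ ^ 2 * G ^ 2) * (τ ^ 2 / (k : ℝ) ^ 2) := by ring
  -- finish
  rw [hexp, abs_mul, abs_inv, abs_of_pos hY0]
  rw [inv_mul_eq_div]
  calc |⟪vh i, vh m⟫ - ∑ j ∈ Finset.Iio m, ⟪vh m, v j⟫ * ⟪vh i, v j⟫| / Y m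
      ≤ (M + τ ^ 2 * G ^ 2) * (τ ^ 2 / (k : ℝ) ^ 2) /
          Real.sqrt (1 - M * τ ^ 2 - G ^ 2 * τ ^ 4) := by
        exact div_le_div₀ (mul_nonneg (by nlinarith [sq_nonneg (τ * G)]) (by positivity)) hnum hD hYlo
    _ = (M + τ ^ 2 * G ^ 2) / Real.sqrt (1 - M * τ ^ 2 - G ^ 2 * τ ^ 4) *
          (τ ^ 2 / (k : ℝ) ^ 2) := by ring
    _ ≤ G * (τ ^ 2 / (k : ℝ) ^ 2) := by
        exact mul_le_mul_of_nonneg_right hτG (by positivity)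
    _ = G * τ ^ 2 / (k : ℝ) ^ 2 := by ring
end

section
/- Let F: ℝ^d → ℝ^d be Lipschitz with constant L₁ on the unit sphere and bounded by L₂ on the unit sphere, and let x, x' ∈ S^{d−1}, v_1,...,v_k, v'_1,...,v'_k ∈ ℝ^d with each family orthonormal. Then ‖∑_{j=1}^k (v_j v_jᵀ F(x) − v'_j (v'_j)ᵀ F(x'))‖ ≤ L₂·∑_{j=1}^k (‖v_j − v'_j‖·‖v_j‖ + ‖v'_j‖·‖v_j − v'_j‖) + L₁·‖x − x'‖, where the last term's constant is independent of k. -/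
open RealInnerProductSpace

lemma proj_contract {d k : ℕ} (v' : Fin k → EuclideanSpace ℝ (Fin d))
    (hv' : Orthonormal ℝ v') (w : EuclideanSpace ℝ (Fin d)) :
    ‖∑ j, ⟪v' j, w⟫ • v' j‖ ≤ ‖w‖ := by
  have h1 : ‖∑ j, ⟪v' j, w⟫ • v' j‖ ^ 2 = ∑ j, ‖⟪v' j, w⟫‖ ^ 2 := by
    rw [← real_inner_self_eq_norm_sq,
      hv'.inner_sum (fun j => ⟪v' j, w⟫) (fun j => ⟪v' j, w⟫) Finset.univ]
    simp [Real.norm_eq_abs, sq_abs, sq]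
  have h2 := hv'.sum_inner_products_le (s := Finset.univ) w
  rw [← h1] at h2
  nlinarith [norm_nonneg (∑ j, ⟪v' j, w⟫ • v' j), norm_nonneg w]

theorem projected_force_stability
    (d k : ℕ) (L₁ L₂ : ℝ)
    (F : EuclideanSpace ℝ (Fin d) → EuclideanSpace ℝ (Fin d))
    (hLip : ∀ y y' : EuclideanSpace ℝ (Fin d), ‖y‖ = 1 → ‖y'‖ = 1 →
      ‖F y - F y'‖ ≤ L₁ * ‖y - y'‖)
    (hbd : ∀ y : EuclideanSpace ℝ (Fin d), ‖y‖ = 1 → ‖F y‖ ≤ L₂)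
    (x x' : EuclideanSpace ℝ (Fin d)) (hx : ‖x‖ = 1) (hx' : ‖x'‖ = 1)
    (v v' : Fin k → EuclideanSpace ℝ (Fin d))
    (hv : Orthonormal ℝ v) (hv' : Orthonormal ℝ v') :
    ‖∑ j, (⟪v j, F x⟫ • v j - ⟪v' j, F x'⟫ • v' j)‖
      ≤ L₂ * ∑ j, (‖v j - v' j‖ * ‖v j‖ + ‖v' j‖ * ‖v j - v' j‖)
        + L₁ * ‖x - x'‖ := by
  have hsplit : ∀ j : Fin k, ⟪v j, F x⟫ • v j - ⟪v' j, F x'⟫ • v' j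
      = (⟪v j - v' j, F x⟫ • v j + ⟪v' j, F x⟫ • (v j - v' j))
        + ⟪v' j, F x - F x'⟫ • v' j := by
    intro j
    simp only [inner_sub_left, inner_sub_right, sub_smul, smul_sub]
    abel
  rw [Finset.sum_congr rfl fun j _ => hsplit j, Finset.sum_add_distrib]
  refine (norm_add_le _ _).trans (add_le_add ?_ ?_)
  · calc ‖∑ j, (⟪v j - v' j, F x⟫ • v j + ⟪v' j, F x⟫ • (v j - v' j))‖
        ≤ ∑ j, ‖⟪v j - v' j, F x⟫ • v j + ⟪v' j, F x⟫ • (v j - v' j)‖ :=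
          norm_sum_le _ _
      _ ≤ ∑ j, L₂ * (‖v j - v' j‖ * ‖v j‖ + ‖v' j‖ * ‖v j - v' j‖) := by
          refine Finset.sum_le_sum fun j _ => ?_
          have hF := hbd x hx
          calc ‖⟪v j - v' j, F x⟫ • v j + ⟪v' j, F x⟫ • (v j - v' j)‖
              ≤ ‖⟪v j - v' j, F x⟫ • v j‖ + ‖⟪v' j, F x⟫ • (v j - v' j)‖ :=
                norm_add_le _ _
            _ ≤ ‖v j - v' j‖ * ‖F x‖ * ‖v j‖ + ‖v' j‖ * ‖F x‖ * ‖v j - v' j‖ := by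
                rw [norm_smul, norm_smul]
                gcongr <;>
                  · rw [Real.norm_eq_abs]; exact abs_real_inner_le_norm _ _
            _ ≤ L₂ * (‖v j - v' j‖ * ‖v j‖ + ‖v' j‖ * ‖v j - v' j‖) := by
                have h1 : ‖v j - v' j‖ * ‖F x‖ * ‖v j‖ ≤ L₂ * (‖v j - v' j‖ * ‖v j‖) := by
                  have := mul_le_mul_of_nonneg_left hF (norm_nonneg (v j - v' j))
                  nlinarith [norm_nonneg (v j), norm_nonneg (v j - v' j)]
                have h2 : ‖v' j‖ * ‖F x‖ * ‖v j - v' j‖ ≤ L₂ * (‖v' j‖ * ‖v j - v' j‖) := by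
                  nlinarith [norm_nonneg (v' j), norm_nonneg (v j - v' j),
                    mul_le_mul_of_nonneg_left hF (norm_nonneg (v' j))]
                linarith
      _ = L₂ * ∑ j, (‖v j - v' j‖ * ‖v j‖ + ‖v' j‖ * ‖v j - v' j‖) := by
          rw [Finset.mul_sum]
  · calc ‖∑ j, ⟪v' j, F x - F x'⟫ • v' j‖ ≤ ‖F x - F x'‖ :=
        proj_contract v' hv' _
      _ ≤ L₁ * ‖x - x'‖ := hLip x x' hx hx'
end
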